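/- Let (X,ℬ,μ,T) be a measure-preserving system on a probability space and take the uniform system of coefficients c_S^n = 2^{−n}. Then sup_α Asc_μ(X,α,T) = sup_α Int_μ(X,α,T) = h_μ(X,T), where the suprema are over all finite measurable partitions α of X and h_μ(X,T) is the measure-theoretic (Kolmogorov–Sinai) entropy. -/

import Mathlib

open Set Filter Topology MeasureTheory

/-- The entropy `H_μ(α_S)` of the join `α_S = ⋁_{i∈S} T^{-i}α` of a finite measurable
partition `α` (indexed by `ι`) along a set of times `S ⊆ n*`. -/
noncomputable def partEntropyOn {X ι : Type*} [MeasurableSpace X] [Fintype ι]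
    (μ : Measure X) (T : X → X) (α : ι → Set X) {n : ℕ} (S : Finset (Fin n)) : ℝ :=
  ∑ f : {i : Fin n // i ∈ S} → ι,
    Real.negMulLog (μ (⋂ i : {i : Fin n // i ∈ S}, (T^[(i.1 : ℕ)]) ⁻¹' α (f i))).toReal

/-- `α` is a finite measurable partition of `X`. -/
def IsMeasPartition {X ι : Type*} [MeasurableSpace X] (α : ι → Set X) : Prop :=
  (∀ i, MeasurableSet (α i)) ∧ (∀ i j, i ≠ j → Disjoint (α i) (α j)) ∧ ⋃ i, α i = Set.univ

namespace EntAux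

lemma negMulLog_add_le {a b : ℝ} (ha : 0 ≤ a) (hb : 0 ≤ b) :
    Real.negMulLog (a + b) ≤ Real.negMulLog a + Real.negMulLog b := by
  rcases eq_or_lt_of_le ha with h | h
  · simp [← h]
  rcases eq_or_lt_of_le hb with h' | h'
  · simp [← h']
  simp only [Real.negMulLog, neg_mul, add_mul]
  have h1 : a * Real.log a ≤ a * Real.log (a + b) :=
    mul_le_mul_of_nonneg_left (Real.log_le_log h (by linarith)) ha
  have h2 : b * Real.log b ≤ b * Real.log (a + b) :=
    mul_le_mul_of_nonneg_left (Real.log_le_log h' (by linarith)) hb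
  linarith

lemma negMulLog_sum_le {κ : Type*} (s : Finset κ) (f : κ → ℝ) (hf : ∀ k ∈ s, 0 ≤ f k) :
    Real.negMulLog (∑ k ∈ s, f k) ≤ ∑ k ∈ s, Real.negMulLog (f k) := by
  induction s using Finset.cons_induction with
  | empty => simp
  | cons a s ha ih =>
    rw [Finset.sum_cons, Finset.sum_cons]
    refine le_trans (negMulLog_add_le (hf a (Finset.mem_cons_self a s))
      (Finset.sum_nonneg fun k hk => hf k (Finset.mem_cons_of_mem hk))) ?_
    exact add_le_add le_rfl (ih fun k hk => hf k (Finset.mem_cons_of_mem hk))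

lemma mul_log_le {p r : ℝ} (hp : 0 ≤ p) (hr : 0 ≤ r) (h : p ≠ 0 → r ≠ 0) :
    p * Real.log r - p * Real.log p ≤ r - p := by
  rcases eq_or_lt_of_le hp with h0 | h0
  · simp [← h0, hr]
  have hr0 : 0 < r := lt_of_le_of_ne hr (Ne.symm (h h0.ne'))
  have : Real.log (r / p) ≤ r / p - 1 := Real.log_le_sub_one_of_pos (by positivity)
  rw [Real.log_div hr0.ne' h0.ne'] at this
  have := mul_le_mul_of_nonneg_left this hp
  rw [mul_sub, mul_sub, mul_div_cancel₀ _ h0.ne', mul_one] at this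
  linarith

variable {X : Type*} [MeasurableSpace X] (μ : Measure X) [IsProbabilityMeasure μ]

/-- Entropy of a finite-valued map. -/
noncomputable def mapEnt {ι : Type*} [Fintype ι] (g : X → ι) : ℝ :=
  ∑ i, Real.negMulLog (μ (g ⁻¹' {i})).toReal

/-- All fibers measurable. -/
def FibM {ι : Type*} (g : X → ι) : Prop := ∀ i, MeasurableSet (g ⁻¹' {i})

variable {μ}

lemma toReal_le_one (s : Set X) : (μ s).toReal ≤ 1 := by
  have := prob_le_one (μ := μ) (s := s)
  calc (μ s).toReal ≤ (1 : ENNReal).toReal := ENNReal.toReal_mono (by simp) this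
  _ = 1 := by simp

lemma mapEnt_nonneg {ι : Type*} [Fintype ι] (g : X → ι) : 0 ≤ mapEnt μ g :=
  Finset.sum_nonneg fun i _ => Real.negMulLog_nonneg ENNReal.toReal_nonneg (toReal_le_one _)

lemma sum_fiber_toReal {ι : Type*} [Fintype ι] {g : X → ι} (hg : FibM g) :
    ∑ i, (μ (g ⁻¹' {i})).toReal = 1 := by
  have hdisj : (↑(Finset.univ : Finset ι) : Set ι).PairwiseDisjoint (fun i => g ⁻¹' {i}) := by
    intro i _ j _ hij
    simp only [Function.onFun, Set.disjoint_left]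
    rintro x hx hx'
    exact hij (by rw [← hx, ← hx'])
  have hU : ⋃ i ∈ (Finset.univ : Finset ι), g ⁻¹' {i} = Set.univ := by
    ext x; simp
  have := measure_biUnion_finset (μ := μ) hdisj (fun i _ => hg i)
  rw [hU] at this
  rw [← ENNReal.toReal_sum (fun i _ => measure_ne_top μ _), ← this, measure_univ]
  simp

lemma mapEnt_comp_le {ι κ : Type*} [Fintype ι] [Fintype κ] [DecidableEq κ]
    {g : X → ι} (hg : FibM g) (j : ι → κ) :
    mapEnt μ (j ∘ g) ≤ mapEnt μ g := by
  have hfib : ∀ k : κ, (j ∘ g) ⁻¹' {k} = ⋃ i ∈ Finset.univ.filter (fun i => j i = k), g ⁻¹' {i} := by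
    intro k
    ext x
    simp [Function.comp, eq_comm]
  have hmeas : ∀ k : κ, (μ ((j ∘ g) ⁻¹' {k})).toReal
      = ∑ i ∈ Finset.univ.filter (fun i => j i = k), (μ (g ⁻¹' {i})).toReal := by
    intro k
    rw [hfib k, measure_biUnion_finset (μ := μ) ?_ (fun i _ => hg i),
      ENNReal.toReal_sum (fun i _ => measure_ne_top μ _)]
    intro i _ i' _ hii'
    simp only [Function.onFun, Set.disjoint_left]
    rintro x hx hx'
    exact hii' (by rw [← hx, ← hx'])
  calc mapEnt μ (j ∘ g)
      = ∑ k, Real.negMulLog (∑ i ∈ Finset.univ.filter (fun i => j i = k),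
          (μ (g ⁻¹' {i})).toReal) := by
        unfold mapEnt; exact Finset.sum_congr rfl fun k _ => by rw [hmeas k]
    _ ≤ ∑ k, ∑ i ∈ Finset.univ.filter (fun i => j i = k),
          Real.negMulLog (μ (g ⁻¹' {i})).toReal :=
        Finset.sum_le_sum fun k _ => negMulLog_sum_le _ _ fun i _ => ENNReal.toReal_nonneg
    _ = mapEnt μ g := by
        unfold mapEnt
        exact Finset.sum_fiberwise _ _ _

lemma mapEnt_comp_equiv {ι κ : Type*} [Fintype ι] [Fintype κ] (g : X → ι) (e : ι ≃ κ) :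
    mapEnt μ (⇑e ∘ g) = mapEnt μ g := by
  unfold mapEnt
  rw [← Equiv.sum_comp e (fun k => Real.negMulLog (μ ((⇑e ∘ g) ⁻¹' {k})).toReal)]
  refine Finset.sum_congr rfl fun i _ => ?_
  have h1 : (⇑e ∘ g) ⁻¹' {e i} = g ⁻¹' {i} := by
    ext x; simp [Function.comp]
  rw [h1]

lemma mapEnt_comp_measurePreserving {ι : Type*} [Fintype ι] {g : X → ι} (hg : FibM g)
    {τ : X → X} (hτ : MeasurePreserving τ μ μ) :
    mapEnt μ (g ∘ τ) = mapEnt μ g := by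
  unfold mapEnt
  refine Finset.sum_congr rfl fun i _ => ?_
  have h1 : (g ∘ τ) ⁻¹' {i} = τ ⁻¹' (g ⁻¹' {i}) := rfl
  rw [h1, hτ.measure_preimage (hg i).nullMeasurableSet]

lemma mapEnt_pair_le {ι κ : Type*} [Fintype ι] [Fintype κ]
    {g : X → ι} {h : X → κ} (hg : FibM g) (hh : FibM h) :
    mapEnt μ (fun x => (g x, h x)) ≤ mapEnt μ g + mapEnt μ h := by
  classical
  set p : ι → κ → ℝ := fun i k => (μ ((fun x => (g x, h x)) ⁻¹' {(i, k)})).toReal with hp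
  have hpnn : ∀ i k, 0 ≤ p i k := fun i k => ENNReal.toReal_nonneg
  have hfib : ∀ i k, (fun x => (g x, h x)) ⁻¹' {(i, k)} = g ⁻¹' {i} ∩ h ⁻¹' {k} := by
    intro i k; ext x; simp [Prod.ext_iff]
  have hmarg1 : ∀ i, (μ (g ⁻¹' {i})).toReal = ∑ k, p i k := by
    intro i
    have hdisj : (↑(Finset.univ : Finset κ) : Set κ).PairwiseDisjoint
        (fun k => g ⁻¹' {i} ∩ h ⁻¹' {k}) := by
      intro k _ k' _ hkk'
      simp only [Function.onFun, Set.disjoint_left]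
      rintro x ⟨_, hx⟩ ⟨_, hx'⟩
      exact hkk' (by rw [← hx, ← hx'])
    have hU : ⋃ k ∈ (Finset.univ : Finset κ), (g ⁻¹' {i} ∩ h ⁻¹' {k}) = g ⁻¹' {i} := by
      ext x; simp
    have := measure_biUnion_finset (μ := μ) hdisj (fun k _ => (hg i).inter (hh k))
    rw [hU] at this
    rw [this, ENNReal.toReal_sum (fun k _ => measure_ne_top μ _)]
    exact Finset.sum_congr rfl fun k _ => by rw [hp]; congr 1; rw [hfib]
  have hmarg2 : ∀ k, (μ (h ⁻¹' {k})).toReal = ∑ i, p i k := by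
    intro k
    have hdisj : (↑(Finset.univ : Finset ι) : Set ι).PairwiseDisjoint
        (fun i => g ⁻¹' {i} ∩ h ⁻¹' {k}) := by
      intro i _ i' _ hii'
      simp only [Function.onFun, Set.disjoint_left]
      rintro x ⟨hx, _⟩ ⟨hx', _⟩
      exact hii' (by rw [← hx, ← hx'])
    have hU : ⋃ i ∈ (Finset.univ : Finset ι), (g ⁻¹' {i} ∩ h ⁻¹' {k}) = h ⁻¹' {k} := by
      ext x; simp
    have := measure_biUnion_finset (μ := μ) hdisj (fun i _ => (hg i).inter (hh k))
    rw [hU] at this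
    rw [this, ENNReal.toReal_sum (fun i _ => measure_ne_top μ _)]
    exact Finset.sum_congr rfl fun i _ => by rw [hp]; congr 1; rw [hfib]
  set P : ι → ℝ := fun i => (μ (g ⁻¹' {i})).toReal with hP
  set Q : κ → ℝ := fun k => (μ (h ⁻¹' {k})).toReal with hQ
  have hPnn : ∀ i, 0 ≤ P i := fun i => ENNReal.toReal_nonneg
  have hQnn : ∀ k, 0 ≤ Q k := fun k => ENNReal.toReal_nonneg
  have hPsum : ∑ i, P i = 1 := sum_fiber_toReal hg
  have hQsum : ∑ k, Q k = 1 := sum_fiber_toReal hh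
  have hple : ∀ i k, p i k ≤ P i := by
    intro i k
    calc p i k ≤ ∑ k', p i k' :=
          Finset.single_le_sum (fun k' _ => hpnn i k') (Finset.mem_univ k)
      _ = P i := (hmarg1 i).symm
  have hqle : ∀ i k, p i k ≤ Q k := by
    intro i k
    calc p i k ≤ ∑ i', p i' k :=
          Finset.single_le_sum (fun i' _ => hpnn i' k) (Finset.mem_univ i)
      _ = Q k := (hmarg2 k).symm
  -- termwise bound
  have key : ∀ i k, Real.negMulLog (p i k)
      ≤ (- p i k * Real.log (P i)) + (- p i k * Real.log (Q k)) + (P i * Q k - p i k) := by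
    intro i k
    rcases eq_or_lt_of_le (hpnn i k) with h0 | h0
    · simp only [← h0, Real.negMulLog_zero, neg_zero, zero_mul, zero_add, sub_zero]
      positivity
    have hPi : 0 < P i := lt_of_lt_of_le h0 (hple i k)
    have hQk : 0 < Q k := lt_of_lt_of_le h0 (hqle i k)
    have := mul_log_le (p := p i k) (r := P i * Q k) (le_of_lt h0) (by positivity)
      (fun _ => by positivity)
    rw [Real.log_mul hPi.ne' hQk.ne'] at this
    simp only [Real.negMulLog, neg_mul]
    nlinarith [this]
  calc mapEnt μ (fun x => (g x, h x))
      = ∑ i, ∑ k, Real.negMulLog (p i k) := by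
        unfold mapEnt
        rw [Fintype.sum_prod_type]
    _ ≤ ∑ i, ∑ k, ((- p i k * Real.log (P i)) + (- p i k * Real.log (Q k))
          + (P i * Q k - p i k)) :=
        Finset.sum_le_sum fun i _ => Finset.sum_le_sum fun k _ => key i k
    _ = (∑ i, ∑ k, (- p i k * Real.log (P i)))
          + (∑ i, ∑ k, (- p i k * Real.log (Q k)))
          + (∑ i, ∑ k, (P i * Q k - p i k)) := by
        simp only [Finset.sum_add_distrib]
    _ = mapEnt μ g + mapEnt μ h := by
        have e1 : ∑ i, ∑ k, (- p i k * Real.log (P i)) = mapEnt μ g := by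
          refine Finset.sum_congr rfl fun i _ => ?_
          show ∑ k, (- p i k * Real.log (P i)) = Real.negMulLog (P i)
          have hsum : ∑ k, p i k = P i := (hmarg1 i).symm
          calc ∑ k, (- p i k * Real.log (P i)) = - (∑ k, p i k) * Real.log (P i) := by
                rw [← Finset.sum_neg_distrib, ← Finset.sum_mul]
            _ = Real.negMulLog (P i) := by rw [hsum]; rfl
        have e2 : ∑ i, ∑ k, (- p i k * Real.log (Q k)) = mapEnt μ h := by
          rw [Finset.sum_comm]
          refine Finset.sum_congr rfl fun k _ => ?_
          show ∑ i, (- p i k * Real.log (Q k)) = Real.negMulLog (Q k)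
          have hsum : ∑ i, p i k = Q k := (hmarg2 k).symm
          calc ∑ i, (- p i k * Real.log (Q k)) = - (∑ i, p i k) * Real.log (Q k) := by
                rw [← Finset.sum_neg_distrib, ← Finset.sum_mul]
            _ = Real.negMulLog (Q k) := by rw [hsum]; rfl
        have h2 : ∑ i, ∑ k, p i k = 1 := by
          rw [← hPsum]
          exact Finset.sum_congr rfl fun i _ => (hmarg1 i).symm
        have e3 : ∑ i, ∑ k, (P i * Q k - p i k) = 0 := by
          have h1 : ∑ i, ∑ k, P i * Q k = 1 := by
            rw [← Finset.sum_mul_sum, hPsum, hQsum, one_mul]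
          calc ∑ i, ∑ k, (P i * Q k - p i k)
              = (∑ i, ∑ k, P i * Q k) - ∑ i, ∑ k, p i k := by
                rw [← Finset.sum_sub_distrib]
                exact Finset.sum_congr rfl fun i _ => by rw [Finset.sum_sub_distrib]
            _ = 0 := by rw [h1, h2]; ring
        rw [e1, e2, e3, add_zero]



variable {X : Type*} [MeasurableSpace X] {μ : Measure X} [IsProbabilityMeasure μ]
variable {ι : Type*} [Fintype ι] [DecidableEq ι]

/-- The joint coding map along a time set. -/
def Jmap (T : X → X) (c : X → ι) {n : ℕ} (S : Finset (Fin n)) :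
    X → ({i : Fin n // i ∈ S} → ι) :=
  fun x i => c (T^[(i.1 : ℕ)] x)

/-- Entropy of the join along `S`. -/
noncomputable def HS (μ : Measure X) (T : X → X) (c : X → ι) {n : ℕ}
    (S : Finset (Fin n)) : ℝ :=
  mapEnt μ (Jmap T c S)

variable {T : X → X} {c : X → ι}

lemma fibM_Jmap (hT : Measurable T) (hc : FibM c) {n : ℕ} (S : Finset (Fin n)) :
    FibM (Jmap T c S) := by
  intro f
  have : Jmap T c S ⁻¹' {f} = ⋂ i : {i : Fin n // i ∈ S}, (T^[(i.1 : ℕ)]) ⁻¹' (c ⁻¹' {f i}) := by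
    ext x
    simp only [Set.mem_preimage, Set.mem_singleton_iff, Set.mem_iInter, funext_iff, Jmap]
  rw [this]
  exact MeasurableSet.iInter fun i => (hT.iterate _) (hc (f i))

lemma HS_nonneg {n : ℕ} (S : Finset (Fin n)) : 0 ≤ HS μ T c S := mapEnt_nonneg _

lemma HS_mono (hT : Measurable T) (hc : FibM c) {n : ℕ} {S S' : Finset (Fin n)}
    (hsub : S ⊆ S') : HS μ T c S ≤ HS μ T c S' := by
  have hco : Jmap T c S =
      (fun (g : {i : Fin n // i ∈ S'} → ι) (i : {i : Fin n // i ∈ S}) => g ⟨i.1, hsub i.2⟩)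
        ∘ Jmap T c S' := rfl
  rw [HS, hco]
  exact mapEnt_comp_le (fibM_Jmap hT hc S') _

lemma HS_union_le (hT : Measurable T) (hc : FibM c) {n : ℕ} (S₁ S₂ : Finset (Fin n)) :
    HS μ T c (S₁ ∪ S₂) ≤ HS μ T c S₁ + HS μ T c S₂ := by
  classical
  set j : ({i : Fin n // i ∈ S₁} → ι) × ({i : Fin n // i ∈ S₂} → ι) →
      ({i : Fin n // i ∈ S₁ ∪ S₂} → ι) :=
    fun gh i => if h1 : i.1 ∈ S₁ then gh.1 ⟨i.1, h1⟩
      else gh.2 ⟨i.1, (Finset.mem_union.mp i.2).resolve_left h1⟩ with hj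
  have hco : Jmap T c (S₁ ∪ S₂) = j ∘ (fun x => (Jmap T c S₁ x, Jmap T c S₂ x)) := by
    funext x
    funext i
    by_cases h1 : i.1 ∈ S₁ <;> simp [hj, Jmap, h1, Function.comp]
  rw [HS, hco]
  refine le_trans (mapEnt_comp_le ?_ j) ?_
  · intro fg
    have : (fun x => (Jmap T c S₁ x, Jmap T c S₂ x)) ⁻¹' {fg}
        = (Jmap T c S₁ ⁻¹' {fg.1}) ∩ (Jmap T c S₂ ⁻¹' {fg.2}) := by
      ext x; simp [Prod.ext_iff]
    rw [this]
    exact (fibM_Jmap hT hc S₁ fg.1).inter (fibM_Jmap hT hc S₂ fg.2)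
  · exact mapEnt_pair_le (fibM_Jmap hT hc S₁) (fibM_Jmap hT hc S₂)

/-- Master relabelling lemma: shifting all times by `k` preserves entropy. -/
lemma HS_relabel (hT : MeasurePreserving T μ μ) (hc : FibM c)
    {n n' : ℕ} {S : Finset (Fin n)} {S' : Finset (Fin n')} (k : ℕ)
    (f : {j : Fin n' // j ∈ S'} → {i : Fin n // i ∈ S})
    (hf : ∀ j, ((f j).1 : ℕ) = (j.1 : ℕ) + k)
    (hsurj : Function.Surjective f) :
    HS μ T c S = HS μ T c S' := by
  have hinj : Function.Injective f := by
    intro j j' h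
    have : ((f j).1 : ℕ) = ((f j').1 : ℕ) := by rw [h]
    rw [hf j, hf j'] at this
    have : (j.1 : ℕ) = (j'.1 : ℕ) := by omega
    exact Subtype.ext (Fin.ext this)
  set e := Equiv.ofBijective f ⟨hinj, hsurj⟩ with he
  -- precomposition with e
  have key : (fun x => (Jmap T c S x) ∘ e) = Jmap T c S' ∘ (T^[k]) := by
    funext x
    funext j
    show c (T^[((f j).1 : ℕ)] x) = c (T^[(j.1 : ℕ)] (T^[k] x))
    rw [hf j, Function.iterate_add_apply]
  have e2 : mapEnt μ (fun x => (Jmap T c S x) ∘ e) = mapEnt μ (Jmap T c S) := by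
    have : (fun x => (Jmap T c S x) ∘ e)
        = ⇑(Equiv.arrowCongr e.symm (Equiv.refl ι)) ∘ Jmap T c S := by
      funext x
      funext j
      simp [Equiv.arrowCongr]
    rw [this, mapEnt_comp_equiv]
  rw [HS, HS, ← e2, key, mapEnt_comp_measurePreserving (fibM_Jmap hT.measurable hc S')
    (hT.iterate k)]

lemma HS_singleton (hT : MeasurePreserving T μ μ) (hc : FibM c) {n : ℕ} (j : Fin n) :
    HS μ T c ({j} : Finset (Fin n)) = mapEnt μ c := by
  classical
  letI hu : Unique {i : Fin n // i ∈ ({j} : Finset (Fin n))} :=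
    ⟨⟨⟨j, Finset.mem_singleton_self j⟩⟩, by
      rintro ⟨i, hi⟩
      simp only [Finset.mem_singleton] at hi
      exact Subtype.ext hi⟩
  have hco : ⇑(Equiv.funUnique {i : Fin n // i ∈ ({j} : Finset (Fin n))} ι)
      ∘ Jmap T c ({j} : Finset (Fin n)) = c ∘ (T^[(j : ℕ)]) := rfl
  rw [HS, ← mapEnt_comp_equiv (μ := μ) (Jmap T c ({j} : Finset (Fin n)))
    (Equiv.funUnique _ ι), hco, mapEnt_comp_measurePreserving hc (hT.iterate _)]

lemma HS_union_card_le (hT : MeasurePreserving T μ μ) (hc : FibM c) {n : ℕ}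
    (W V : Finset (Fin n)) :
    HS μ T c (W ∪ V) ≤ HS μ T c W + (V.card : ℝ) * mapEnt μ c := by
  classical
  induction V using Finset.induction_on with
  | empty => simp
  | @insert a V ha ih =>
    have h1 : W ∪ insert a V = ({a} : Finset (Fin n)) ∪ (W ∪ V) := by
      ext x; simp [or_comm, or_left_comm]
    calc HS μ T c (W ∪ insert a V)
        ≤ HS μ T c ({a} : Finset (Fin n)) + HS μ T c (W ∪ V) := by
          rw [h1]; exact HS_union_le hT.measurable hc _ _
      _ ≤ mapEnt μ c + (HS μ T c W + (V.card : ℝ) * mapEnt μ c) := by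
          rw [HS_singleton hT hc a]
          exact add_le_add le_rfl ih
      _ = HS μ T c W + ((insert a V).card : ℝ) * mapEnt μ c := by
          rw [Finset.card_insert_of_notMem ha]
          push_cast
          ring


noncomputable def ascSeq (μ : Measure X) (T : X → X) (c : X → ι) (n : ℕ) : ℝ :=
  ∑ S : Finset (Fin n), (1 / 2 ^ n : ℝ) * HS μ T c S

noncomputable def topSeq (μ : Measure X) (T : X → X) (c : X → ι) (n : ℕ) : ℝ :=
  HS μ T c (Finset.univ : Finset (Fin n))

def finsetSumEquiv {γ δ : Type*} : Finset γ × Finset δ ≃ Finset (γ ⊕ δ) where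
  toFun PQ := PQ.1.disjSum PQ.2
  invFun S := (S.toLeft, S.toRight)
  left_inv := by rintro ⟨P, Q⟩; simp
  right_inv S := Finset.toLeft_disjSum_toRight

def splitEquiv (n m : ℕ) : Finset (Fin n) × Finset (Fin m) ≃ Finset (Fin (n + m)) :=
  finsetSumEquiv.trans (Equiv.finsetCongr finSumFinEquiv)

lemma splitEquiv_eq {n m : ℕ} (P : Finset (Fin n)) (Q : Finset (Fin m)) :
    splitEquiv n m (P, Q) = P.image (Fin.castAdd m) ∪ Q.image (Fin.natAdd n) := by
  ext x
  simp only [splitEquiv, finsetSumEquiv, Equiv.trans_apply, Equiv.coe_fn_mk,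
    Equiv.finsetCongr_apply, Finset.mem_map, Finset.mem_disjSum, Finset.mem_union,
    Finset.mem_image, Equiv.coe_toEmbedding]
  constructor
  · rintro ⟨a, (⟨b, hb, rfl⟩ | ⟨b, hb, rfl⟩), rfl⟩
    · exact Or.inl ⟨b, hb, rfl⟩
    · exact Or.inr ⟨b, hb, rfl⟩
  · rintro (⟨b, hb, rfl⟩ | ⟨b, hb, rfl⟩)
    · exact ⟨Sum.inl b, Or.inl ⟨b, hb, rfl⟩, rfl⟩
    · exact ⟨Sum.inr b, Or.inr ⟨b, hb, rfl⟩, rfl⟩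

lemma HS_image_castAdd (hT : MeasurePreserving T μ μ) (hc : FibM c) {n m : ℕ}
    (P : Finset (Fin n)) :
    HS μ T c (P.image (Fin.castAdd m)) = HS μ T c P := by
  classical
  refine HS_relabel hT hc 0
    (f := fun j => ⟨Fin.castAdd m j.1, Finset.mem_image_of_mem _ j.2⟩) (fun j => by simp) ?_
  rintro ⟨i, hi⟩
  obtain ⟨a, ha, rfl⟩ := Finset.mem_image.mp hi
  exact ⟨⟨a, ha⟩, rfl⟩

lemma HS_image_natAdd (hT : MeasurePreserving T μ μ) (hc : FibM c) {n m : ℕ}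
    (Q : Finset (Fin m)) :
    HS μ T c (Q.image (Fin.natAdd n)) = HS μ T c Q := by
  classical
  refine HS_relabel hT hc n
    (f := fun j => ⟨Fin.natAdd n j.1, Finset.mem_image_of_mem _ j.2⟩)
    (fun j => by simp [add_comm]) ?_
  rintro ⟨i, hi⟩
  obtain ⟨a, ha, rfl⟩ := Finset.mem_image.mp hi
  exact ⟨⟨a, ha⟩, rfl⟩

lemma HS_split_le (hT : MeasurePreserving T μ μ) (hc : FibM c) {n m : ℕ}
    (P : Finset (Fin n)) (Q : Finset (Fin m)) :
    HS μ T c (P.image (Fin.castAdd m) ∪ Q.image (Fin.natAdd n))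
      ≤ HS μ T c P + HS μ T c Q := by
  refine le_trans (HS_union_le hT.measurable hc _ _) ?_
  rw [HS_image_castAdd hT hc, HS_image_natAdd hT hc]

lemma card_finset_fin (m : ℕ) :
    (Finset.univ : Finset (Finset (Fin m))).card = 2 ^ m := by
  rw [Finset.card_univ, Fintype.card_finset, Fintype.card_fin]

lemma ascSeq_nonneg (n : ℕ) : 0 ≤ ascSeq μ T c n :=
  Finset.sum_nonneg fun S _ => mul_nonneg (by positivity) (HS_nonneg S)

lemma ascSeq_subadd (hT : MeasurePreserving T μ μ) (hc : FibM c) :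
    Subadditive (ascSeq μ T c) := by
  intro n m
  rw [ascSeq, ← Equiv.sum_comp (splitEquiv n m) (fun S => (1 / 2 ^ (n + m) : ℝ) * HS μ T c S),
    Fintype.sum_prod_type]
  have key : ∀ (P : Finset (Fin n)) (Q : Finset (Fin m)),
      (1 / 2 ^ (n + m) : ℝ) * HS μ T c (splitEquiv n m (P, Q))
        ≤ (1 / 2 ^ (n + m) : ℝ) * (HS μ T c P + HS μ T c Q) := by
    intro P Q
    refine mul_le_mul_of_nonneg_left ?_ (by positivity)
    rw [splitEquiv_eq]
    exact HS_split_le hT hc P Q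
  calc ∑ P : Finset (Fin n), ∑ Q : Finset (Fin m),
        (1 / 2 ^ (n + m) : ℝ) * HS μ T c (splitEquiv n m (P, Q))
      ≤ ∑ P : Finset (Fin n), ∑ Q : Finset (Fin m),
        (1 / 2 ^ (n + m) : ℝ) * (HS μ T c P + HS μ T c Q) :=
        Finset.sum_le_sum fun P _ => Finset.sum_le_sum fun Q _ => key P Q
    _ = ascSeq μ T c n + ascSeq μ T c m := by
        have hpow : (2 : ℝ) ^ (n + m) = 2 ^ n * 2 ^ m := pow_add 2 n m
        unfold ascSeq
        simp only [mul_add, Finset.sum_add_distrib]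
        congr 1
        · refine Finset.sum_congr rfl fun P _ => ?_
          rw [Finset.sum_const, card_finset_fin, nsmul_eq_mul, hpow]
          push_cast
          field_simp
        · rw [Finset.sum_comm]
          refine Finset.sum_congr rfl fun Q _ => ?_
          rw [Finset.sum_const, card_finset_fin, nsmul_eq_mul, hpow]
          push_cast
          field_simp


lemma univ_split (n m : ℕ) : (Finset.univ : Finset (Fin (n + m)))
    = (Finset.univ : Finset (Fin n)).image (Fin.castAdd m)
      ∪ (Finset.univ : Finset (Fin m)).image (Fin.natAdd n) := by
  ext i
  simp only [Finset.mem_univ, true_iff, Finset.mem_union, Finset.mem_image]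
  rcases lt_or_ge (i : ℕ) n with h | h
  · exact Or.inl ⟨⟨(i : ℕ), h⟩, trivial, by ext; simp⟩
  · refine Or.inr ⟨⟨(i : ℕ) - n, by omega⟩, trivial, ?_⟩
    ext
    simp only [Fin.coe_natAdd]
    omega

lemma topSeq_subadd (hT : MeasurePreserving T μ μ) (hc : FibM c) :
    Subadditive (topSeq μ T c) := by
  intro n m
  unfold topSeq
  calc HS μ T c (Finset.univ : Finset (Fin (n + m)))
      ≤ HS μ T c (Finset.univ : Finset (Fin n)) + HS μ T c (Finset.univ : Finset (Fin m)) := by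
        rw [univ_split n m]
        exact HS_split_le hT hc _ _
    _ = _ := rfl

lemma ascSeq_le_topSeq (hT : Measurable T) (hc : FibM c) (n : ℕ) :
    ascSeq μ T c n ≤ topSeq μ T c n := by
  unfold ascSeq
  calc ∑ S : Finset (Fin n), (1 / 2 ^ n : ℝ) * HS μ T c S
      ≤ ∑ _S : Finset (Fin n), (1 / 2 ^ n : ℝ) * topSeq μ T c n :=
        Finset.sum_le_sum fun S _ => mul_le_mul_of_nonneg_left
          (HS_mono hT hc (Finset.subset_univ S)) (by positivity)
    _ = topSeq μ T c n := by
        rw [Finset.sum_const, card_finset_fin, nsmul_eq_mul]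
        push_cast
        field_simp

lemma ascSeq_tendsto (hT : MeasurePreserving T μ μ) (hc : FibM c) :
    Tendsto (fun n => ascSeq μ T c n / n) atTop (𝓝 ((ascSeq_subadd hT hc).lim)) :=
  (ascSeq_subadd hT hc).tendsto_lim
    ⟨0, by rintro x ⟨k, rfl⟩; exact div_nonneg (ascSeq_nonneg k) (Nat.cast_nonneg k)⟩

lemma topSeq_tendsto (hT : MeasurePreserving T μ μ) (hc : FibM c) :
    Tendsto (fun n => topSeq μ T c n / n) atTop (𝓝 ((topSeq_subadd hT hc).lim)) :=
  (topSeq_subadd hT hc).tendsto_lim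
    ⟨0, by rintro x ⟨k, rfl⟩; exact div_nonneg (HS_nonneg _) (Nat.cast_nonneg k)⟩

lemma lim_asc_le_lim_top (hT : MeasurePreserving T μ μ) (hc : FibM c) :
    (ascSeq_subadd hT hc).lim ≤ (topSeq_subadd hT hc).lim := by
  refine le_of_tendsto_of_tendsto' (ascSeq_tendsto hT hc) (topSeq_tendsto hT hc) fun n => ?_
  rcases Nat.eq_zero_or_pos n with h | h
  · simp [h]
  · exact div_le_div_of_nonneg_right (ascSeq_le_topSeq hT.measurable hc n)
      (by positivity)

lemma sum_weight (n : ℕ) : ∑ _S : Finset (Fin n), (1 / 2 ^ n : ℝ) = 1 := by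
  rw [Finset.sum_const, card_finset_fin, nsmul_eq_mul]
  push_cast
  field_simp

lemma sum_compl_fin (n : ℕ) (F : Finset (Fin n) → ℝ) :
    ∑ S : Finset (Fin n), F Sᶜ = ∑ S : Finset (Fin n), F S :=
  Fintype.sum_bijective _ (Function.Involutive.bijective (fun S : Finset (Fin n) => compl_compl S))
    _ _ (fun _ => rfl)

lemma intSeq_eq (n : ℕ) :
    ∑ S : Finset (Fin n), (1 / 2 ^ n : ℝ) *
        (HS μ T c S + HS μ T c Sᶜ - HS μ T c (Finset.univ : Finset (Fin n)))
      = 2 * ascSeq μ T c n - topSeq μ T c n := by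
  simp only [mul_add, mul_sub, Finset.sum_add_distrib, Finset.sum_sub_distrib]
  have h1 : ∑ S : Finset (Fin n), (1 / 2 ^ n : ℝ) * HS μ T c Sᶜ = ascSeq μ T c n :=
    sum_compl_fin n (fun S => (1 / 2 ^ n : ℝ) * HS μ T c S)
  have h2 : ∑ _S : Finset (Fin n), (1 / 2 ^ n : ℝ) *
      HS μ T c (Finset.univ : Finset (Fin n)) = topSeq μ T c n := by
    rw [← Finset.sum_mul, sum_weight, one_mul]
    rfl
  rw [h1, h2]
  unfold ascSeq
  ring


def blockCode (T : X → X) (c : X → ι) (k : ℕ) : X → (Fin k → ι) :=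
  fun x i => c (T^[(i : ℕ)] x)

lemma fibM_blockCode (hT : Measurable T) (hc : FibM c) (k : ℕ) :
    FibM (blockCode T c k) := by
  intro f
  have h1 : blockCode T c k ⁻¹' {f} = ⋂ i : Fin k, (T^[(i : ℕ)]) ⁻¹' (c ⁻¹' {f i}) := by
    ext x
    simp only [Set.mem_preimage, Set.mem_singleton_iff, Set.mem_iInter, funext_iff, blockCode]
  rw [h1]
  exact MeasurableSet.iInter fun i => (hT.iterate _) (hc (f i))

/-- The set of times covered by the `k`-blocks starting at points of `S`. -/
def Cov (n k : ℕ) (S : Finset (Fin n)) : Finset (Fin n) :=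
  Finset.univ.filter (fun j => ∃ s ∈ S, (s : ℕ) ≤ (j : ℕ) ∧ (j : ℕ) < (s : ℕ) + k)

/-- Times `s` whose block covers `j`. -/
def Wset (n k : ℕ) (j : Fin n) : Finset (Fin n) :=
  Finset.univ.filter (fun s : Fin n => (s : ℕ) ≤ (j : ℕ) ∧ (j : ℕ) < (s : ℕ) + k)

lemma HS_cov_le_block (hT : Measurable T) (hc : FibM c) {n : ℕ} (k : ℕ)
    (S : Finset (Fin n)) :
    HS μ T c (Cov n k S) ≤ HS μ T (blockCode T c k) S := by
  classical
  have hex : ∀ jj : {j : Fin n // j ∈ Cov n k S},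
      ∃ si : {s : Fin n // s ∈ S} × Fin k, ((si.1.1 : ℕ) + (si.2 : ℕ) = (jj.1 : ℕ)) := by
    rintro ⟨j, hj⟩
    simp only [Cov, Finset.mem_filter, Finset.mem_univ, true_and] at hj
    obtain ⟨s, hs, h1, h2⟩ := hj
    refine ⟨(⟨s, hs⟩, ⟨(j : ℕ) - (s : ℕ), by omega⟩), ?_⟩
    show (s : ℕ) + ((j : ℕ) - (s : ℕ)) = (j : ℕ)
    omega
  choose sel hsel using hex
  have hco : Jmap T c (Cov n k S)
      = (fun (g : {s : Fin n // s ∈ S} → (Fin k → ι)) (jj : {j : Fin n // j ∈ Cov n k S}) =>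
          g (sel jj).1 (sel jj).2) ∘ Jmap T (blockCode T c k) S := by
    funext x
    funext jj
    show c (T^[(jj.1 : ℕ)] x) = c (T^[((sel jj).2 : ℕ)] (T^[((sel jj).1.1 : ℕ)] x))
    rw [← Function.iterate_add_apply]
    have := hsel jj
    congr 2
    omega
  rw [HS, HS, hco]
  exact mapEnt_comp_le (fibM_Jmap hT (fibM_blockCode hT hc k) S) _

lemma topSeq_le_cov (hT : MeasurePreserving T μ μ) (hc : FibM c) {n : ℕ} (k : ℕ)
    (S : Finset (Fin n)) :
    topSeq μ T c n ≤ HS μ T c (Cov n k S)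
      + ((Finset.univ \ Cov n k S).card : ℝ) * mapEnt μ c := by
  have h1 : (Finset.univ : Finset (Fin n)) = Cov n k S ∪ (Finset.univ \ Cov n k S) := by
    rw [Finset.union_sdiff_of_subset (Finset.subset_univ _)]
  calc topSeq μ T c n = HS μ T c (Cov n k S ∪ (Finset.univ \ Cov n k S)) := by
        rw [topSeq, ← h1]
    _ ≤ _ := HS_union_card_le hT hc _ _

lemma card_W_ge {n k : ℕ} (j : Fin n) (hj : k ≤ (j : ℕ) + 1) :
    k ≤ (Wset n k j).card := by
  classical
  have hmain := Finset.card_le_card_of_injOn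
    (f := fun i => (⟨(j : ℕ) - i, by have := j.isLt; omega⟩ : Fin n))
    (s := Finset.range k) (t := Wset n k j) ?_ ?_
  · rwa [Finset.card_range] at hmain
  · intro i hi
    simp only [Finset.mem_coe, Finset.mem_range] at hi
    simp only [Finset.mem_coe, Wset, Finset.mem_filter, Finset.mem_univ, true_and]
    refine ⟨?_, ?_⟩
    · show (j : ℕ) - i ≤ (j : ℕ)
      omega
    · show (j : ℕ) < ((j : ℕ) - i) + k
      omega
  · intro i hi i' hi' h
    simp only [Finset.mem_coe, Finset.mem_range] at hi hi'
    have h2 : (j : ℕ) - i = (j : ℕ) - i' := congrArg Fin.val h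
    omega

lemma prob_disjoint {n : ℕ} (W : Finset (Fin n)) :
    ∑ S : Finset (Fin n), (1 / 2 ^ n : ℝ) * (if Disjoint S W then 1 else 0)
      = 1 / 2 ^ W.card := by
  classical
  have hfil : Finset.univ.filter (fun S : Finset (Fin n) => Disjoint S W) = Wᶜ.powerset := by
    ext S
    simp only [Finset.mem_filter, Finset.mem_univ, true_and, Finset.mem_powerset]
    exact (le_compl_iff_disjoint_right).symm
  have hsum : ∑ S : Finset (Fin n), (1 / 2 ^ n : ℝ) * (if Disjoint S W then 1 else 0)
      = ∑ _S ∈ Finset.univ.filter (fun S : Finset (Fin n) => Disjoint S W),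
          (1 / 2 ^ n : ℝ) := by
    rw [Finset.sum_filter]
    refine Finset.sum_congr rfl fun S _ => ?_
    by_cases h : Disjoint S W <;> simp [h]
  rw [hsum, Finset.sum_const, hfil, Finset.card_powerset, Finset.card_compl, nsmul_eq_mul]
  have hWn : W.card ≤ n := by simpa using Finset.card_le_univ W
  have h2 : (2 : ℝ) ^ n = 2 ^ (Fintype.card (Fin n) - W.card) * 2 ^ W.card := by
    rw [← pow_add]
    congr 1
    simp only [Fintype.card_fin]
    omega
  push_cast
  rw [h2]
  have hne : (2 : ℝ) ^ W.card ≠ 0 := by positivity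
  have hne2 : (2 : ℝ) ^ (Fintype.card (Fin n) - W.card) ≠ 0 := by positivity
  field_simp

lemma Ebound {n : ℕ} (k : ℕ) :
    ∑ S : Finset (Fin n), (1 / 2 ^ n : ℝ) * ((Finset.univ \ Cov n k S).card : ℝ)
      ≤ (k : ℝ) + (n : ℝ) * (1 / 2 ^ k) := by
  classical
  have hcard : ∀ S : Finset (Fin n), ((Finset.univ \ Cov n k S).card : ℝ)
      = ∑ j : Fin n, (if Disjoint S (Wset n k j) then (1 : ℝ) else 0) := by
    intro S
    have h2 : Finset.univ \ Cov n k S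
        = Finset.univ.filter (fun j => Disjoint S (Wset n k j)) := by
      ext j
      simp only [Finset.mem_sdiff, Finset.mem_univ, true_and, Finset.mem_filter, Cov, Wset,
        Finset.disjoint_left, not_exists, not_and]
    rw [h2, Finset.sum_boole]
  calc ∑ S : Finset (Fin n), (1 / 2 ^ n : ℝ) * ((Finset.univ \ Cov n k S).card : ℝ)
      = ∑ j : Fin n, ∑ S : Finset (Fin n),
          (1 / 2 ^ n : ℝ) * (if Disjoint S (Wset n k j) then (1 : ℝ) else 0) := by
        rw [Finset.sum_comm]
        refine Finset.sum_congr rfl fun S _ => ?_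
        rw [hcard S, Finset.mul_sum]
    _ = ∑ j : Fin n, (1 / 2 ^ (Wset n k j).card : ℝ) :=
        Finset.sum_congr rfl fun j _ => prob_disjoint _
    _ ≤ ∑ j : Fin n, ((1 / 2 ^ k : ℝ) + if (j : ℕ) + 1 < k then 1 else 0) := by
        refine Finset.sum_le_sum fun j _ => ?_
        by_cases hj : k ≤ (j : ℕ) + 1
        · have hW := card_W_ge j hj
          have : (1 / 2 ^ (Wset n k j).card : ℝ) ≤ 1 / 2 ^ k := by
            apply div_le_div_of_nonneg_left (by norm_num) (by positivity)
            exact pow_le_pow_right₀ (by norm_num) hW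
          rw [if_neg (by omega)]
          linarith
        · have h1 : (1 / 2 ^ (Wset n k j).card : ℝ) ≤ 1 := by
            rw [div_le_one (by positivity)]
            exact one_le_pow₀ (by norm_num)
          rw [if_pos (by omega)]
          have : (0 : ℝ) ≤ 1 / 2 ^ k := by positivity
          linarith
    _ ≤ (k : ℝ) + (n : ℝ) * (1 / 2 ^ k) := by
        rw [Finset.sum_add_distrib, Finset.sum_const, Finset.card_univ, Fintype.card_fin,
          nsmul_eq_mul, Finset.sum_boole]
        have hcount : (Finset.univ.filter (fun j : Fin n => (j : ℕ) + 1 < k)).card ≤ k := by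
          have hmain := Finset.card_le_card_of_injOn (f := fun j : Fin n => (j : ℕ))
            (s := Finset.univ.filter (fun j : Fin n => (j : ℕ) + 1 < k))
            (t := Finset.range k) ?_ ?_
          · rwa [Finset.card_range] at hmain
          · intro j hj
            simp only [Finset.mem_coe, Finset.mem_filter, Finset.mem_univ, true_and] at hj
            simp only [Finset.mem_coe, Finset.mem_range]
            omega
          · intro a _ b _ h
            exact Fin.ext h
        have : ((Finset.univ.filter (fun j : Fin n => (j : ℕ) + 1 < k)).card : ℝ) ≤ k := by
          exact_mod_cast hcount
        linarith

lemma ascSeq_block_ge (hT : MeasurePreserving T μ μ) (hc : FibM c) (k n : ℕ) :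
    topSeq μ T c n - ((k : ℝ) + (n : ℝ) * (1 / 2 ^ k)) * mapEnt μ c
      ≤ ascSeq μ T (blockCode T c k) n := by
  classical
  have key : ∀ S : Finset (Fin n),
      topSeq μ T c n - ((Finset.univ \ Cov n k S).card : ℝ) * mapEnt μ c
        ≤ HS μ T (blockCode T c k) S := by
    intro S
    have h1 := topSeq_le_cov hT hc k S
    have h2 := HS_cov_le_block (μ := μ) hT.measurable hc k S
    linarith
  calc topSeq μ T c n - ((k : ℝ) + (n : ℝ) * (1 / 2 ^ k)) * mapEnt μ c
      ≤ topSeq μ T c n - (∑ S : Finset (Fin n),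
          (1 / 2 ^ n : ℝ) * ((Finset.univ \ Cov n k S).card : ℝ)) * mapEnt μ c := by
        have hE := Ebound (n := n) k
        have hC := mapEnt_nonneg (μ := μ) c
        nlinarith
    _ = ∑ S : Finset (Fin n), (1 / 2 ^ n : ℝ) *
          (topSeq μ T c n - ((Finset.univ \ Cov n k S).card : ℝ) * mapEnt μ c) := by
        simp only [mul_sub, Finset.sum_sub_distrib]
        congr 1
        · rw [← Finset.sum_mul, sum_weight, one_mul]
        · rw [Finset.sum_mul]
          exact Finset.sum_congr rfl fun S _ => by ring
    _ ≤ ∑ S : Finset (Fin n), (1 / 2 ^ n : ℝ) * HS μ T (blockCode T c k) S :=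
        Finset.sum_le_sum fun S _ =>
          mul_le_mul_of_nonneg_left (key S) (by positivity)
    _ = ascSeq μ T (blockCode T c k) n := rfl

lemma topSeq_block_le (hT : Measurable T) (hc : FibM c) (k N : ℕ) :
    topSeq μ T (blockCode T c k) N ≤ topSeq μ T c (N + k) := by
  classical
  have hco : Jmap T (blockCode T c k) (Finset.univ : Finset (Fin N))
      = (fun (g : {i : Fin (N + k) // i ∈ (Finset.univ : Finset (Fin (N + k)))} → ι)
          (s : {s : Fin N // s ∈ (Finset.univ : Finset (Fin N))}) (i : Fin k) =>
          g ⟨⟨(s.1 : ℕ) + (i : ℕ), by have := s.1.isLt; have := i.isLt; omega⟩,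
            Finset.mem_univ _⟩)
        ∘ Jmap T c (Finset.univ : Finset (Fin (N + k))) := by
    funext x
    funext s
    funext i
    show c (T^[(i : ℕ)] (T^[(s.1 : ℕ)] x)) = c (T^[(s.1 : ℕ) + (i : ℕ)] x)
    rw [← Function.iterate_add_apply]
    congr 2
    omega
  rw [topSeq, topSeq, HS, HS, hco]
  exact mapEnt_comp_le (fibM_Jmap hT hc _) _


lemma fibM_postcompose {κ₁ κ₂ : Type*} (e : κ₁ ≃ κ₂) {c₀ : X → κ₁} (hc : FibM c₀) :
    FibM (⇑e ∘ c₀) := by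
  intro j
  have h1 : (⇑e ∘ c₀) ⁻¹' {j} = c₀ ⁻¹' {e.symm j} := by
    ext x
    simp [Function.comp, Equiv.eq_symm_apply]
  rw [h1]
  exact hc _

lemma HS_postcompose_equiv {κ₁ κ₂ : Type*} [Fintype κ₁] [Fintype κ₂]
    (e : κ₁ ≃ κ₂) (c₀ : X → κ₁) {n : ℕ} (S : Finset (Fin n)) :
    HS μ T (⇑e ∘ c₀) S = HS μ T c₀ S := by
  have h1 : Jmap T (⇑e ∘ c₀) S
      = ⇑(Equiv.arrowCongr (Equiv.refl {i : Fin n // i ∈ S}) e) ∘ Jmap T c₀ S := by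
    funext x
    funext i
    simp [Jmap, Equiv.arrowCongr]
  rw [HS, HS, h1, mapEnt_comp_equiv]

lemma lim_top_block_le (hT : MeasurePreserving T μ μ) (hc : FibM c) {k : ℕ} (hk : 1 ≤ k) :
    (topSeq_subadd hT (fibM_blockCode hT.measurable hc k)).lim
      ≤ (topSeq_subadd hT hc).lim := by
  set L := (topSeq_subadd hT hc).lim with hL
  have t1 : Tendsto (fun N : ℕ => topSeq μ T c (N + k) / ((N : ℝ) + k)) atTop (𝓝 L) := by
    have := (topSeq_tendsto hT hc).comp (tendsto_add_atTop_nat k)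
    refine this.congr fun N => ?_
    simp only [Function.comp]
    push_cast
    rfl
  have t2 : Tendsto (fun N : ℕ => ((N : ℝ) + k) / N) atTop (𝓝 1) := by
    have h0 : Tendsto (fun N : ℕ => 1 + (k : ℝ) / N) atTop (𝓝 1) := by
      simpa using tendsto_const_nhds.add (tendsto_const_div_atTop_nhds_zero_nat (k : ℝ))
    refine h0.congr' ?_
    filter_upwards [eventually_ge_atTop 1] with N hN
    have hN0 : (N : ℝ) ≠ 0 := by
      have : (1 : ℝ) ≤ N := by exact_mod_cast hN
      linarith
    field_simp
  have t3 : Tendsto (fun N : ℕ => (topSeq μ T c (N + k) / ((N : ℝ) + k)) * (((N : ℝ) + k) / N))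
      atTop (𝓝 (L * 1)) := t1.mul t2
  rw [mul_one] at t3
  refine le_of_tendsto_of_tendsto'
    (topSeq_tendsto hT (fibM_blockCode hT.measurable hc k)) t3 fun N => ?_
  rcases Nat.eq_zero_or_pos N with h | h
  · subst h
    simp
  · have hN0 : (0 : ℝ) < N := by exact_mod_cast h
    have hNk : (0 : ℝ) < (N : ℝ) + k := by positivity
    have hle := topSeq_block_le (μ := μ) hT.measurable hc k N
    have h1 : (topSeq μ T c (N + k) / ((N : ℝ) + k)) * (((N : ℝ) + k) / N)
        = topSeq μ T c (N + k) / N := by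
      field_simp
    rw [h1]
    exact div_le_div_of_nonneg_right hle hN0.le

lemma lim_asc_block_ge (hT : MeasurePreserving T μ μ) (hc : FibM c) (k : ℕ) :
    (topSeq_subadd hT hc).lim - (1 / 2 ^ k : ℝ) * mapEnt μ c
      ≤ (ascSeq_subadd hT (fibM_blockCode hT.measurable hc k)).lim := by
  set C := mapEnt μ c with hC
  have hCnn : 0 ≤ C := mapEnt_nonneg c
  have tf : Tendsto (fun n : ℕ => topSeq μ T c n / n - ((k : ℝ) / n) * C - (1 / 2 ^ k : ℝ) * C)
      atTop (𝓝 ((topSeq_subadd hT hc).lim - 0 * C - (1 / 2 ^ k : ℝ) * C)) :=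
    ((topSeq_tendsto hT hc).sub
      ((tendsto_const_div_atTop_nhds_zero_nat (k : ℝ)).mul_const C)).sub tendsto_const_nhds
  rw [zero_mul, sub_zero] at tf
  refine le_of_tendsto_of_tendsto' tf
    (ascSeq_tendsto hT (fibM_blockCode hT.measurable hc k)) fun n => ?_
  rcases Nat.eq_zero_or_pos n with h | h
  · subst h
    have h2 : (0 : ℝ) ≤ 1 / 2 ^ k * C := mul_nonneg (by positivity) hCnn
    simp only [Nat.cast_zero, div_zero, zero_mul]
    linarith
  · have hn0 : (0 : ℝ) < n := by exact_mod_cast h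
    have hb := ascSeq_block_ge hT hc k n
    have h1 := div_le_div_of_nonneg_right hb hn0.le
    have h2 : (topSeq μ T c n - ((k : ℝ) + (n : ℝ) * (1 / 2 ^ k)) * C) / n
        = topSeq μ T c n / n - ((k : ℝ) / n) * C - (1 / 2 ^ k : ℝ) * C := by
      field_simp
      ring
    rw [h2] at h1
    exact h1


lemma partEntropyOn_eq_HS {m : ℕ} (T : X → X) (α : Fin m → Set X) (c : X → Fin m)
    (hcc : ∀ x i, x ∈ α i ↔ c x = i) {n : ℕ} (S : Finset (Fin n)) :
    partEntropyOn μ T α S = HS μ T c S := by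
  unfold partEntropyOn HS mapEnt
  refine Finset.sum_congr rfl fun f _ => ?_
  have h1 : (⋂ i : {i : Fin n // i ∈ S}, (T^[(i.1 : ℕ)]) ⁻¹' α (f i))
      = Jmap T c S ⁻¹' {f} := by
    ext x
    simp only [Set.mem_iInter, Set.mem_preimage, Set.mem_singleton_iff, funext_iff, Jmap]
    exact forall_congr' fun i => hcc _ _
  rw [h1]

lemma exists_coding {m : ℕ} {α : Fin m → Set X} (hα : IsMeasPartition α) :
    ∃ c : X → Fin m, (∀ x i, x ∈ α i ↔ c x = i) ∧ FibM c := by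
  have hex : ∀ x, ∃ i, x ∈ α i := by
    intro x
    have hx : x ∈ ⋃ i, α i := by rw [hα.2.2]; trivial
    exact Set.mem_iUnion.mp hx
  choose c hc using hex
  have hch : ∀ x i, x ∈ α i ↔ c x = i := by
    intro x i
    constructor
    · intro hx
      by_contra hne
      exact Set.disjoint_left.mp (hα.2.1 i (c x) (fun h => hne h.symm)) hx (hc x)
    · rintro rfl
      exact hc x
  refine ⟨c, hch, fun i => ?_⟩
  have h1 : c ⁻¹' {i} = α i := by
    ext x
    simp only [Set.mem_preimage, Set.mem_singleton_iff]
    exact (hch x i).symm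
  rw [h1]
  exact hα.1 i

lemma isMeasPartition_fibers {m : ℕ} {c : X → Fin m} (hc : FibM c) :
    IsMeasPartition (fun j : Fin m => c ⁻¹' {j}) := by
  refine ⟨hc, ?_, ?_⟩
  · intro i j hij
    rw [Set.disjoint_left]
    rintro x hx hx'
    simp only [Set.mem_preimage, Set.mem_singleton_iff] at hx hx'
    exact hij (hx.symm.trans hx')
  · ext x
    simp


lemma asc_tendsto_stmt {m : ℕ} (hT : MeasurePreserving T μ μ) {α : Fin m → Set X}
    {c : X → Fin m} (hch : ∀ x i, x ∈ α i ↔ c x = i) (hc : FibM c) :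
    Tendsto (fun n : ℕ => (1 / (n : ℝ)) *
        ∑ S : Finset (Fin n), (1 / 2 ^ n : ℝ) * partEntropyOn μ T α S)
      atTop (𝓝 ((ascSeq_subadd hT hc).lim)) := by
  refine (ascSeq_tendsto hT hc).congr fun n => ?_
  have h1 : ∑ S : Finset (Fin n), (1 / 2 ^ n : ℝ) * partEntropyOn μ T α S
      = ascSeq μ T c n :=
    Finset.sum_congr rfl fun S _ => by rw [partEntropyOn_eq_HS T α c hch]
  rw [h1]
  ring

lemma top_tendsto_stmt {m : ℕ} (hT : MeasurePreserving T μ μ) {α : Fin m → Set X}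
    {c : X → Fin m} (hch : ∀ x i, x ∈ α i ↔ c x = i) (hc : FibM c) :
    Tendsto (fun n : ℕ => partEntropyOn μ T α (Finset.univ : Finset (Fin n)) / (n : ℝ))
      atTop (𝓝 ((topSeq_subadd hT hc).lim)) := by
  refine (topSeq_tendsto hT hc).congr fun n => ?_
  rw [partEntropyOn_eq_HS T α c hch]
  rfl

lemma int_tendsto_stmt {m : ℕ} (hT : MeasurePreserving T μ μ) {α : Fin m → Set X}
    {c : X → Fin m} (hch : ∀ x i, x ∈ α i ↔ c x = i) (hc : FibM c) :
    Tendsto (fun n : ℕ => (1 / (n : ℝ)) * ∑ S : Finset (Fin n), (1 / 2 ^ n : ℝ) *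
        (partEntropyOn μ T α S + partEntropyOn μ T α Sᶜ -
          partEntropyOn μ T α (Finset.univ : Finset (Fin n))))
      atTop (𝓝 (2 * (ascSeq_subadd hT hc).lim - (topSeq_subadd hT hc).lim)) := by
  have t := ((ascSeq_tendsto hT hc).const_mul 2).sub (topSeq_tendsto hT hc)
  refine t.congr fun n => ?_
  have h1 : ∑ S : Finset (Fin n), (1 / 2 ^ n : ℝ) *
      (partEntropyOn μ T α S + partEntropyOn μ T α Sᶜ -
        partEntropyOn μ T α (Finset.univ : Finset (Fin n)))
      = 2 * ascSeq μ T c n - topSeq μ T c n := by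
    rw [← intSeq_eq]
    exact Finset.sum_congr rfl fun S _ => by
      rw [partEntropyOn_eq_HS T α c hch, partEntropyOn_eq_HS T α c hch,
        partEntropyOn_eq_HS T α c hch]
  rw [h1]
  ring

lemma block_package (hT : MeasurePreserving T μ μ) {m : ℕ} {c : X → Fin m} (hc : FibM c)
    (k : ℕ) (hk : 1 ≤ k) :
    ∃ (M : ℕ) (β : Fin M → Set X) (c' : X → Fin M) (hc' : FibM c'),
      IsMeasPartition β ∧ (∀ x j, x ∈ β j ↔ c' x = j) ∧
      (topSeq_subadd hT hc).lim - (1 / 2 ^ k : ℝ) * mapEnt μ c ≤ (ascSeq_subadd hT hc').lim ∧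
      (topSeq_subadd hT hc').lim ≤ (topSeq_subadd hT hc).lim := by
  classical
  set cb := blockCode T c k with hcb_def
  have hcb : FibM cb := fibM_blockCode hT.measurable hc k
  set c' : X → Fin (m ^ k) := ⇑finFunctionFinEquiv ∘ cb with hc'_def
  have hc' : FibM c' := fibM_postcompose _ hcb
  have hseq : ∀ (n : ℕ) (S : Finset (Fin n)), HS μ T c' S = HS μ T cb S := fun n S =>
    HS_postcompose_equiv _ _ S
  have hasc : ∀ n, ascSeq μ T c' n = ascSeq μ T cb n := by
    intro n
    unfold ascSeq
    exact Finset.sum_congr rfl fun S _ => by rw [hseq]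
  have htop : ∀ n, topSeq μ T c' n = topSeq μ T cb n := by
    intro n
    unfold topSeq
    rw [hseq]
  have hlima : (ascSeq_subadd hT hc').lim = (ascSeq_subadd hT hcb).lim := by
    refine tendsto_nhds_unique ?_ (ascSeq_tendsto hT hcb)
    exact (ascSeq_tendsto hT hc').congr fun n => by rw [hasc]
  have hlimt : (topSeq_subadd hT hc').lim = (topSeq_subadd hT hcb).lim := by
    refine tendsto_nhds_unique ?_ (topSeq_tendsto hT hcb)
    exact (topSeq_tendsto hT hc').congr fun n => by rw [htop]
  refine ⟨m ^ k, fun j => c' ⁻¹' {j}, c', hc', isMeasPartition_fibers hc',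
    fun x j => Iff.rfl, ?_, ?_⟩
  · rw [hlima]
    exact lim_asc_block_ge hT hc k
  · rw [hlimt]
    exact lim_top_block_le hT hc hk


variable (μ T) in
def ascSet : Set EReal :=
  {a : EReal | ∃ (m : ℕ) (α : Fin m → Set X), IsMeasPartition α ∧
      ∃ r : ℝ, Tendsto (fun n : ℕ =>
          (1 / (n : ℝ)) * ∑ S : Finset (Fin n), (1 / 2 ^ n : ℝ) * partEntropyOn μ T α S)
        atTop (𝓝 r) ∧ a = (r : EReal)}

variable (μ T) in
def ksSet : Set EReal :=
  {h : EReal | ∃ (m : ℕ) (α : Fin m → Set X), IsMeasPartition α ∧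
      ∃ r : ℝ, Tendsto (fun n : ℕ =>
          partEntropyOn μ T α (Finset.univ : Finset (Fin n)) / (n : ℝ))
        atTop (𝓝 r) ∧ h = (r : EReal)}

variable (μ T) in
def intSet : Set EReal :=
  {a : EReal | ∃ (m : ℕ) (α : Fin m → Set X), IsMeasPartition α ∧
      ∃ r : ℝ, Tendsto (fun n : ℕ =>
          (1 / (n : ℝ)) * ∑ S : Finset (Fin n), (1 / 2 ^ n : ℝ) *
            (partEntropyOn μ T α S + partEntropyOn μ T α Sᶜ -
              partEntropyOn μ T α (Finset.univ : Finset (Fin n))))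
        atTop (𝓝 r) ∧ a = (r : EReal)}

lemma upAsc (hT : MeasurePreserving T μ μ) : sSup (ascSet μ T) ≤ sSup (ksSet μ T) := by
  refine sSup_le ?_
  rintro a ⟨m, α, hα, r, htend, rfl⟩
  obtain ⟨c, hch, hc⟩ := exists_coding hα
  have hr : r = (ascSeq_subadd hT hc).lim :=
    tendsto_nhds_unique htend (asc_tendsto_stmt hT hch hc)
  have hmem : (((topSeq_subadd hT hc).lim : ℝ) : EReal) ∈ ksSet μ T :=
    ⟨m, α, hα, _, top_tendsto_stmt hT hch hc, rfl⟩
  refine le_trans ?_ (le_sSup hmem)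
  rw [EReal.coe_le_coe_iff, hr]
  exact lim_asc_le_lim_top hT hc

lemma upInt (hT : MeasurePreserving T μ μ) : sSup (intSet μ T) ≤ sSup (ksSet μ T) := by
  refine sSup_le ?_
  rintro a ⟨m, α, hα, r, htend, rfl⟩
  obtain ⟨c, hch, hc⟩ := exists_coding hα
  have hr : r = 2 * (ascSeq_subadd hT hc).lim - (topSeq_subadd hT hc).lim :=
    tendsto_nhds_unique htend (int_tendsto_stmt hT hch hc)
  have hmem : (((topSeq_subadd hT hc).lim : ℝ) : EReal) ∈ ksSet μ T :=
    ⟨m, α, hα, _, top_tendsto_stmt hT hch hc, rfl⟩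
  refine le_trans ?_ (le_sSup hmem)
  rw [EReal.coe_le_coe_iff, hr]
  have h1 := lim_asc_le_lim_top hT hc
  linarith

lemma lowerKS (hT : MeasurePreserving T μ μ) :
    ∀ b ∈ ksSet μ T, b ≤ sSup (ascSet μ T) ∧ b ≤ sSup (intSet μ T) := by
  rintro b ⟨m, α, hα, r, htend, rfl⟩
  obtain ⟨c, hch, hc⟩ := exists_coding hα
  have hr : r = (topSeq_subadd hT hc).lim :=
    tendsto_nhds_unique htend (top_tendsto_stmt hT hch hc)
  set L := (topSeq_subadd hT hc).lim with hL
  set C := mapEnt μ c with hCdef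
  have hCnn : 0 ≤ C := mapEnt_nonneg c
  have key : ∀ k : ℕ, ((L - (1 / 2 ^ (k + 1) : ℝ) * C : ℝ) : EReal) ≤ sSup (ascSet μ T)
      ∧ ((L - 2 * ((1 / 2 ^ (k + 1) : ℝ) * C) : ℝ) : EReal) ≤ sSup (intSet μ T) := by
    intro k
    obtain ⟨M, β, c', hc', hβ, hch', hA, hTle⟩ := block_package hT hc (k + 1) (by omega)
    constructor
    · have hmem : (((ascSeq_subadd hT hc').lim : ℝ) : EReal) ∈ ascSet μ T :=
        ⟨M, β, hβ, _, asc_tendsto_stmt hT hch' hc', rfl⟩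
      exact le_trans (EReal.coe_le_coe_iff.mpr hA) (le_sSup hmem)
    · have hmem : ((2 * (ascSeq_subadd hT hc').lim - (topSeq_subadd hT hc').lim : ℝ) : EReal)
          ∈ intSet μ T :=
        ⟨M, β, hβ, _, int_tendsto_stmt hT hch' hc', rfl⟩
      refine le_trans (EReal.coe_le_coe_iff.mpr ?_) (le_sSup hmem)
      linarith
  have t0 : Tendsto (fun k : ℕ => (1 / 2 ^ (k + 1) : ℝ) * C) atTop (𝓝 0) := by
    have h1 : Tendsto (fun k : ℕ => (1 / 2 : ℝ) ^ (k + 1)) atTop (𝓝 0) :=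
      (tendsto_pow_atTop_nhds_zero_of_lt_one (by norm_num) (by norm_num)).comp
        (tendsto_add_atTop_nat 1)
    have h2 := h1.mul_const C
    rw [zero_mul] at h2
    refine h2.congr fun k => ?_
    show (1 / 2 : ℝ) ^ (k + 1) * C = (1 / 2 ^ (k + 1) : ℝ) * C
    rw [one_div_pow]
  have tA : Tendsto (fun k : ℕ => ((L - (1 / 2 ^ (k + 1) : ℝ) * C : ℝ) : EReal)) atTop
      (𝓝 ((L : ℝ) : EReal)) := by
    rw [EReal.tendsto_coe]
    have h3 := (tendsto_const_nhds : Tendsto (fun _ : ℕ => L) atTop (𝓝 L)).sub t0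
    rwa [sub_zero] at h3
  have tI : Tendsto (fun k : ℕ => ((L - 2 * ((1 / 2 ^ (k + 1) : ℝ) * C) : ℝ) : EReal)) atTop
      (𝓝 ((L : ℝ) : EReal)) := by
    rw [EReal.tendsto_coe]
    have h2 := t0.const_mul 2
    rw [mul_zero] at h2
    have h3 := (tendsto_const_nhds : Tendsto (fun _ : ℕ => L) atTop (𝓝 L)).sub h2
    rwa [sub_zero] at h3
  constructor
  · rw [hr]
    exact le_of_tendsto tA (Eventually.of_forall fun k => (key k).1)
  · rw [hr]
    exact le_of_tendsto tI (Eventually.of_forall fun k => (key k).2)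

end EntAux

open EntAux in
/-- with uniform coefficients `c_S^n = 2^{-n}`,
`sup_α Asc_μ(X,α,T) = sup_α Int_μ(X,α,T) = h_μ(X,T)`, the suprema being over all finite
measurable partitions `α` and `h_μ(X,T)` the Kolmogorov–Sinai entropy. -/
theorem sup_asc_eq_sup_int_eq_entropy
    {X : Type*} [MeasurableSpace X]
    (μ : Measure X) [IsProbabilityMeasure μ]
    (T : X → X) (hT : MeasurePreserving T μ μ) :
    sSup {a : EReal | ∃ (m : ℕ) (α : Fin m → Set X), IsMeasPartition α ∧
        ∃ r : ℝ, Tendsto (fun n : ℕ =>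
            (1 / (n : ℝ)) * ∑ S : Finset (Fin n), (1 / 2 ^ n : ℝ) * partEntropyOn μ T α S)
          atTop (𝓝 r) ∧ a = (r : EReal)}
      =
    sSup {h : EReal | ∃ (m : ℕ) (α : Fin m → Set X), IsMeasPartition α ∧
        ∃ r : ℝ, Tendsto (fun n : ℕ =>
            partEntropyOn μ T α (Finset.univ : Finset (Fin n)) / (n : ℝ))
          atTop (𝓝 r) ∧ h = (r : EReal)}
    ∧
    sSup {a : EReal | ∃ (m : ℕ) (α : Fin m → Set X), IsMeasPartition α ∧
        ∃ r : ℝ, Tendsto (fun n : ℕ =>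
            (1 / (n : ℝ)) * ∑ S : Finset (Fin n), (1 / 2 ^ n : ℝ) *
              (partEntropyOn μ T α S + partEntropyOn μ T α Sᶜ -
                partEntropyOn μ T α (Finset.univ : Finset (Fin n))))
          atTop (𝓝 r) ∧ a = (r : EReal)}
      =
    sSup {h : EReal | ∃ (m : ℕ) (α : Fin m → Set X), IsMeasPartition α ∧
        ∃ r : ℝ, Tendsto (fun n : ℕ =>
            partEntropyOn μ T α (Finset.univ : Finset (Fin n)) / (n : ℝ))
          atTop (𝓝 r) ∧ h = (r : EReal)} := by
  show sSup (ascSet μ T) = sSup (ksSet μ T) ∧ sSup (intSet μ T) = sSup (ksSet μ T)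
  constructor
  · exact le_antisymm (upAsc hT) (sSup_le fun b hb => (lowerKS hT b hb).1)
  · exact le_antisymm (upInt hT) (sSup_le fun b hb => (lowerKS hT b hb).2)
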